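/- Let T > 0, a ∈ ℝ, σ > 0, H ∈ (1/2, 1), let g : [0,T] → ℝ be continuous, and let K : [0,T] × [0,T] → ℝ be a nonnegative measurable function with K(t,θ) = 0 for θ > t, satisfying ∫₀^{min(s,t)} K(t,θ)K(s,θ) dθ = (1/2)(t^{2H} + s^{2H} − |t−s|^{2H}) for all 0 ≤ s, t ≤ T. Define D_θ := σ ∫_θ^T K(s,θ) e^{a s + g(s)} ds / ∫₀ᵀ e^{a s + g(s)} ds. Then ∫₀ᵀ D_θ² dθ ≥ (σ² T^{2H} / (2H + 2)) · exp(−4|a|T + 2 min_{[0,T]} g − 2 max_{[0,T]} g). -/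

import Mathlib

open MeasureTheory

section
open intervalIntegral

namespace PMLBaux

lemma contp {p : ℝ} (hp : 0 < p) : Continuous fun x : ℝ => x ^ p := by
  rw [continuous_iff_continuousAt]
  intro x; exact Real.continuousAt_rpow_const x p (Or.inr hp.le)

lemma intp {p : ℝ} (hp : 0 < p) (b : ℝ) : ∫ x in (0:ℝ)..b, x ^ p = b ^ (p+1) / (p+1) := by
  rw [integral_rpow (Or.inl (by linarith)), Real.zero_rpow (by positivity : (0:ℝ) < p+1).ne', sub_zero]

lemma inner_eq {T p : ℝ} (hp : 0 < p) {s : ℝ} (hs : s ∈ Set.Icc (0:ℝ) T) :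
    ∫ t in (0:ℝ)..T, (1/2)*(t^p + s^p - |t-s|^p)
      = (1/2)*(T^(p+1)/(p+1) + s^p*T - s^(p+1)/(p+1) - (T-s)^(p+1)/(p+1)) := by
  obtain ⟨hs0, hsT⟩ := hs
  have c1 : Continuous fun t : ℝ => t ^ p := contp hp
  have c3 : Continuous fun t : ℝ => |t - s| ^ p :=
    (contp hp).comp ((continuous_id.sub continuous_const).abs)
  have i1 : IntervalIntegrable (fun t : ℝ => t ^ p) volume 0 T := c1.intervalIntegrable _ _
  have i2 : IntervalIntegrable (fun _ : ℝ => s ^ p) volume 0 T := intervalIntegrable_const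
  have i3 : ∀ u v : ℝ, IntervalIntegrable (fun t : ℝ => |t - s| ^ p) volume u v :=
    fun u v => c3.intervalIntegrable _ _
  have split : (∫ t in (0:ℝ)..T, (1/2)*(t^p + s^p - |t-s|^p))
      = (1/2) * ((∫ t in (0:ℝ)..T, t^p) + s^p*T - ∫ t in (0:ℝ)..T, |t-s|^p) := by
    rw [intervalIntegral.integral_const_mul]
    rw [intervalIntegral.integral_sub (i1.add i2) (i3 0 T), intervalIntegral.integral_add i1 i2]
    simp [mul_comm]
  rw [split, intp hp]
  have habs : (∫ t in (0:ℝ)..T, |t-s|^p) = s^(p+1)/(p+1) + (T-s)^(p+1)/(p+1) := by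
    rw [← intervalIntegral.integral_add_adjacent_intervals (i3 0 s) (i3 s T)]
    have h1 : (∫ t in (0:ℝ)..s, |t-s|^p) = s^(p+1)/(p+1) := by
      rw [intervalIntegral.integral_congr (g := fun t => (s - t)^p)]
      · have := intervalIntegral.integral_comp_sub_left (a := (0:ℝ)) (b := s) (fun u : ℝ => u ^ p) s
        rw [this]; simp only [sub_self, sub_zero]; exact intp hp s
      · intro t ht
        rw [Set.uIcc_of_le hs0] at ht
        show |t - s| ^ p = (s - t) ^ p
        rw [show |t - s| = s - t from by rw [abs_of_nonpos (by linarith [ht.2]), neg_sub]]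
    have h2 : (∫ t in s..T, |t-s|^p) = (T-s)^(p+1)/(p+1) := by
      rw [intervalIntegral.integral_congr (g := fun t => (t - s)^p)]
      · have := intervalIntegral.integral_comp_sub_right (a := s) (b := T) (fun u : ℝ => u ^ p) s
        rw [this]; simp only [sub_self]; exact intp hp (T - s)
      · intro t ht
        rw [Set.uIcc_of_le hsT] at ht
        show |t - s| ^ p = (t - s) ^ p
        rw [abs_of_nonneg (by linarith [ht.1] : (0:ℝ) ≤ t - s)]
    rw [h1, h2]
  rw [habs]; ring

lemma double_int {T p : ℝ} (hT : 0 < T) (hp : 0 < p) :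
    ∫ s in (0:ℝ)..T, ∫ t in (0:ℝ)..T, (1/2)*(t^p + s^p - |t-s|^p)
      = T^(p+2)/(p+2) := by
  rw [intervalIntegral.integral_congr
    (g := fun s => (1/2)*(T^(p+1)/(p+1) + s^p*T - s^(p+1)/(p+1) - (T-s)^(p+1)/(p+1)))
    (fun s hs => inner_eq hp (by rwa [Set.uIcc_of_le hT.le] at hs))]
  have c1 : Continuous fun t : ℝ => t ^ p := contp hp
  have c2 : Continuous fun t : ℝ => t ^ (p+1) := contp (by linarith)
  have c4 : Continuous fun t : ℝ => (T - t) ^ (p+1) :=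
    c2.comp (continuous_const.sub continuous_id)
  have i1 : IntervalIntegrable (fun t : ℝ => t^p * T) volume 0 T :=
    (c1.mul continuous_const).intervalIntegrable _ _
  have i2 : IntervalIntegrable (fun t : ℝ => t^(p+1)/(p+1)) volume 0 T :=
    (c2.div_const _).intervalIntegrable _ _
  have i4 : IntervalIntegrable (fun t : ℝ => (T - t)^(p+1)/(p+1)) volume 0 T :=
    (c4.div_const _).intervalIntegrable _ _
  have ic : IntervalIntegrable (fun _ : ℝ => T^(p+1)/(p+1)) volume 0 T := intervalIntegrable_const
  rw [intervalIntegral.integral_const_mul,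
    intervalIntegral.integral_sub ((ic.add i1).sub i2) i4,
    intervalIntegral.integral_sub (ic.add i1) i2,
    intervalIntegral.integral_add ic i1]
  have e1 : (∫ s in (0:ℝ)..T, s^p * T) = T^(p+1)/(p+1) * T := by
    rw [intervalIntegral.integral_mul_const, intp hp]
  have e2 : (∫ s in (0:ℝ)..T, s^(p+1)/(p+1)) = T^(p+2)/(p+2)/(p+1) := by
    rw [intervalIntegral.integral_div, intp (by linarith : (0:ℝ) < p+1)]
    norm_num [show p+1+1 = p+2 by ring]
  have e4 : (∫ s in (0:ℝ)..T, (T-s)^(p+1)/(p+1)) = T^(p+2)/(p+2)/(p+1) := by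
    rw [intervalIntegral.integral_div]
    have := intervalIntegral.integral_comp_sub_left (a := (0:ℝ)) (b := T) (fun u : ℝ => u ^ (p+1)) T
    rw [this]; simp only [sub_self, sub_zero]
    rw [intp (by linarith : (0:ℝ) < p+1)]
    norm_num [show p+1+1 = p+2 by ring]
  rw [intervalIntegral.integral_const, e1, e2, e4]
  have hTp2 : T^(p+2) = T^(p+1) * T := by
    rw [show p+2 = (p+1)+1 by ring, Real.rpow_add_one hT.ne']
  rw [hTp2]
  have h1 : p + 1 ≠ 0 := by positivity
  have h2 : p + 2 ≠ 0 := by positivity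
  field_simp
  have hinv : (p+1)⁻¹ * (p+1) = 1 := inv_mul_cancel₀ h1
  linear_combination T^(p+1)*T*(p+2)*hinv

lemma Rnn {p s t : ℝ} (hp : 0 < p) (hs : 0 ≤ s) (ht : 0 ≤ t) :
    0 ≤ (1/2) * (t^p + s^p - |t-s|^p) := by
  have h1 : |t - s| ^ p ≤ t ^ p + s ^ p := by
    rcases le_total s t with h | h
    · have : |t - s| ^ p ≤ t ^ p :=
        Real.rpow_le_rpow (abs_nonneg _) (by rw [abs_of_nonneg (by linarith)]; linarith) hp.le
      have h2 : 0 ≤ s ^ p := Real.rpow_nonneg hs p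
      linarith
    · have : |t - s| ^ p ≤ s ^ p :=
        Real.rpow_le_rpow (abs_nonneg _) (by rw [abs_of_nonpos (by linarith)]; linarith) hp.le
      have h2 : 0 ≤ t ^ p := Real.rpow_nonneg ht p
      linarith
  linarith

lemma Rpos {p s t : ℝ} (hp : 0 < p) (hs : 0 < s) (ht : 0 < t) :
    0 < (1/2) * (t^p + s^p - |t-s|^p) := by
  rcases le_total s t with h | h
  · have h1 : |t - s| ^ p ≤ t ^ p :=
      Real.rpow_le_rpow (abs_nonneg _) (by rw [abs_of_nonneg (by linarith)]; linarith) hp.le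
    have h2 : 0 < s ^ p := Real.rpow_pos_of_pos hs p
    linarith
  · have h1 : |t - s| ^ p ≤ s ^ p :=
      Real.rpow_le_rpow (abs_nonneg _) (by rw [abs_of_nonpos (by linarith)]; linarith) hp.le
    have h2 : 0 < t ^ p := Real.rpow_pos_of_pos ht p
    linarith


lemma key_identity (T H : ℝ) (hT : 0 < T) (hH : H ∈ Set.Ioo (1/2:ℝ) 1)
    (K : ℝ → ℝ → ℝ) (hKmeas : Measurable (Function.uncurry K))
    (hKnn : ∀ t θ, 0 ≤ K t θ) (hKzero : ∀ t θ, t < θ → K t θ = 0)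
    (hrep : ∀ s ∈ Set.Icc (0:ℝ) T, ∀ t ∈ Set.Icc (0:ℝ) T,
        (∫ θ in (0:ℝ)..(min s t), K t θ * K s θ) =
          (1/2) * (t ^ (2*H) + s ^ (2*H) - |t - s| ^ (2*H))) :
    ∫⁻ θ in Set.Ioc (0:ℝ) T, (∫⁻ s in Set.Ioc (0:ℝ) T, ENNReal.ofReal (K s θ)) ^ 2
      = ENNReal.ofReal (T^(2*H+2)/(2*H+2)) := by
  set p := 2*H with hpdef
  have hp : 0 < p := by have := hH.1; dsimp [p]; linarith
  set A := Set.Ioc (0:ℝ) T with hAdef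
  have hA : MeasurableSet A := measurableSet_Ioc
  have mke : Measurable fun q : ℝ × ℝ => ENNReal.ofReal (K q.1 q.2) :=
    ENNReal.measurable_ofReal.comp hKmeas
  have msec : ∀ θ, Measurable fun s => ENNReal.ofReal (K s θ) := fun θ =>
    mke.comp (measurable_id.prodMk measurable_const)
  have msec' : ∀ s, Measurable fun θ => ENNReal.ofReal (K s θ) := fun s =>
    mke.comp (measurable_const.prodMk measurable_id)
  -- inner identity
  have hinner : ∀ s ∈ A, ∀ t ∈ A,
      (∫⁻ θ in A, ENNReal.ofReal (K s θ) * ENNReal.ofReal (K t θ))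
        = ENNReal.ofReal ((1/2) * (t^p + s^p - |t - s|^p)) := by
    intro s hs t ht
    have hm : 0 < min s t := lt_min hs.1 ht.1
    have hmT : min s t ≤ T := le_trans (min_le_left _ _) hs.2
    have hRpos : 0 < (1/2) * (t^p + s^p - |t-s|^p) := Rpos hp hs.1 ht.1
    have hval := hrep s ⟨hs.1.le, hs.2⟩ t ⟨ht.1.le, ht.2⟩
    rw [intervalIntegral.integral_of_le hm.le] at hval
    have hint : IntegrableOn (fun θ => K t θ * K s θ) (Set.Ioc 0 (min s t)) volume := by
      by_contra hni
      rw [MeasureTheory.integral_undef hni] at hval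
      exact absurd hval.symm hRpos.ne'
    have hAsplit : A = Set.Ioc 0 (min s t) ∪ Set.Ioc (min s t) T :=
      (Set.Ioc_union_Ioc_eq_Ioc hm.le hmT).symm
    have hzero : (∫⁻ θ in Set.Ioc (min s t) T,
        ENNReal.ofReal (K s θ) * ENNReal.ofReal (K t θ)) = 0 := by
      rw [setLIntegral_congr_fun_ae (g := fun _ => 0) measurableSet_Ioc
        (ae_of_all _ (fun θ hθ => ?_)), lintegral_zero]
      rcases min_lt_iff.mp hθ.1 with h | h
      · rw [hKzero s θ h]; simp
      · rw [hKzero t θ h]; simp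
    have h1 : (∫⁻ θ in Set.Ioc 0 (min s t),
        ENNReal.ofReal (K s θ) * ENNReal.ofReal (K t θ))
        = ENNReal.ofReal ((1/2)*(t^p+s^p-|t-s|^p)) := by
      rw [← hval, ofReal_integral_eq_lintegral_ofReal hint
        (ae_of_all _ fun θ => mul_nonneg (hKnn _ _) (hKnn _ _))]
      exact lintegral_congr fun θ => by
        rw [ENNReal.ofReal_mul (hKnn t θ), mul_comm]
    rw [hAsplit, lintegral_union measurableSet_Ioc (Set.Ioc_disjoint_Ioc_of_le le_rfl), h1, hzero, add_zero]
  -- Tonelli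
  have hsq : ∀ θ, (∫⁻ s in A, ENNReal.ofReal (K s θ))^2
      = ∫⁻ s in A, ∫⁻ t in A, ENNReal.ofReal (K s θ) * ENNReal.ofReal (K t θ) := by
    intro θ
    rw [sq, ← lintegral_mul_const _ (msec θ)]
    exact lintegral_congr fun s => (lintegral_const_mul _ (msec θ)).symm
  have hswap1 : (∫⁻ θ in A, ∫⁻ s in A, ∫⁻ t in A,
        ENNReal.ofReal (K s θ) * ENNReal.ofReal (K t θ))
      = ∫⁻ s in A, ∫⁻ θ in A, ∫⁻ t in A,
        ENNReal.ofReal (K s θ) * ENNReal.ofReal (K t θ) := by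
    apply lintegral_lintegral_swap
    apply Measurable.aemeasurable
    apply Measurable.lintegral_prod_right (f := fun (q : ℝ × ℝ) (t : ℝ) =>
      ENNReal.ofReal (K q.2 q.1) * ENNReal.ofReal (K t q.1))
    exact (mke.comp ((measurable_snd.comp measurable_fst).prodMk
        (measurable_fst.comp measurable_fst))).mul
      (mke.comp (measurable_snd.prodMk (measurable_fst.comp measurable_fst)))
  have hswap2 : ∀ s, (∫⁻ θ in A, ∫⁻ t in A,
        ENNReal.ofReal (K s θ) * ENNReal.ofReal (K t θ))
      = ∫⁻ t in A, ∫⁻ θ in A,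
        ENNReal.ofReal (K s θ) * ENNReal.ofReal (K t θ) := by
    intro s
    apply lintegral_lintegral_swap
    apply Measurable.aemeasurable
    exact ((msec' s).comp measurable_fst).mul (mke.comp (measurable_snd.prodMk measurable_fst))
  -- put together
  have step1 : (∫⁻ θ in A, (∫⁻ s in A, ENNReal.ofReal (K s θ))^2)
      = ∫⁻ s in A, ∫⁻ t in A, ENNReal.ofReal ((1/2)*(t^p+s^p-|t-s|^p)) := by
    rw [lintegral_congr hsq, hswap1]
    rw [lintegral_congr hswap2]
    exact setLIntegral_congr_fun_ae hA (ae_of_all _ fun s hs =>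
      setLIntegral_congr_fun_ae hA (ae_of_all _ fun t ht => hinner s hs t ht))
  rw [step1]
  -- compute the double lintegral
  set ψ : ℝ → ℝ := fun s =>
    (1/2)*(T^(p+1)/(p+1) + s^p*T - s^(p+1)/(p+1) - (T-s)^(p+1)/(p+1)) with hψdef
  have hRc : ∀ s : ℝ, Continuous fun t : ℝ => (1/2)*(t^p+s^p-|t-s|^p) := by
    intro s
    exact continuous_const.mul (((contp hp).add continuous_const).sub
      ((contp hp).comp ((continuous_id.sub continuous_const).abs)))
  have hstep2 : ∀ s ∈ A, (∫⁻ t in A, ENNReal.ofReal ((1/2)*(t^p+s^p-|t-s|^p)))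
      = ENNReal.ofReal (ψ s) := by
    intro s hs
    rw [← ofReal_integral_eq_lintegral_ofReal ((hRc s).integrableOn_Ioc)
      ((ae_restrict_iff' hA).mpr (ae_of_all _ fun t ht => Rnn hp hs.1.le ht.1.le))]
    congr 1
    rw [← intervalIntegral.integral_of_le hT.le]
    exact inner_eq hp ⟨hs.1.le, hs.2⟩
  have hψnn : ∀ s ∈ A, 0 ≤ ψ s := by
    intro s hs
    simp only [hψdef]
    rw [← inner_eq hp ⟨hs.1.le, hs.2⟩]
    exact intervalIntegral.integral_nonneg hT.le fun t ht => Rnn hp hs.1.le ht.1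
  have hψcont : Continuous ψ := by
    apply continuous_const.mul
    apply Continuous.sub
    apply Continuous.sub
    apply Continuous.add continuous_const
    · exact (contp hp).mul continuous_const
    · exact (contp (by linarith)).div_const _
    · exact ((contp (by linarith)).comp (continuous_const.sub continuous_id)).div_const _
  have hψint : ∫ s in (0:ℝ)..T, ψ s = T^(p+2)/(p+2) := by
    rw [← double_int hT hp]
    apply intervalIntegral.integral_congr
    intro s hs
    exact (inner_eq hp (by rwa [Set.uIcc_of_le hT.le] at hs)).symm
  rw [setLIntegral_congr_fun_ae hA (ae_of_all _ hstep2),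
    ← ofReal_integral_eq_lintegral_ofReal hψcont.integrableOn_Ioc
      ((ae_restrict_iff' hA).mpr (ae_of_all _ hψnn)),
    ← intervalIntegral.integral_of_le hT.le, hψint]

end PMLBaux

/-- Pathwise lower bound (3.12) for the Malliavin matrix: with
`D_θ = σ ∫_θ^T K(s,θ) e^{as+g(s)} ds / ∫₀ᵀ e^{as+g(s)} ds`, where `K` is a nonnegative
measurable Volterra kernel with the fBm reproducing property,
`∫₀ᵀ D_θ² dθ ≥ (σ² T^{2H}/(2H+2)) exp(−4|a|T + 2 min g − 2 max g)`. -/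
theorem pathwise_malliavin_matrix_lower_bound
    (T a σ H : ℝ) (hT : 0 < T) (hσ : 0 < σ) (hH : H ∈ Set.Ioo (1 / 2 : ℝ) 1)
    (g : ℝ → ℝ) (hg : ContinuousOn g (Set.Icc 0 T))
    (K : ℝ → ℝ → ℝ) (hKmeas : Measurable (Function.uncurry K))
    (hKnn : ∀ t θ, 0 ≤ K t θ)
    (hKzero : ∀ t θ, t < θ → K t θ = 0)
    (hrep : ∀ s ∈ Set.Icc (0 : ℝ) T, ∀ t ∈ Set.Icc (0 : ℝ) T,
        (∫ θ in (0 : ℝ)..(min s t), K t θ * K s θ) =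
          (1 / 2) * (t ^ (2 * H) + s ^ (2 * H) - |t - s| ^ (2 * H))) :
    σ ^ 2 * T ^ (2 * H) / (2 * H + 2) *
        Real.exp (-4 * |a| * T + 2 * sInf (g '' Set.Icc 0 T) -
          2 * sSup (g '' Set.Icc 0 T)) ≤
      ∫ θ in (0 : ℝ)..T,
        (σ * (∫ s in θ..T, K s θ * Real.exp (a * s + g s)) /
          (∫ s in (0 : ℝ)..T, Real.exp (a * s + g s))) ^ 2 := by
  obtain ⟨hH1, hH2⟩ := hH
  set p := 2 * H with hpdef
  have hp : 0 < p := by rw [hpdef]; linarith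
  have hp2 : (0:ℝ) < p + 2 := by linarith
  -- clamp and extension of g
  set clamp : ℝ → ℝ := fun x => max 0 (min x T) with hclampdef
  have hclampmem : ∀ x, clamp x ∈ Set.Icc (0:ℝ) T := fun x =>
    ⟨le_max_left _ _, max_le hT.le (min_le_right x T)⟩
  have hclampid : ∀ x ∈ Set.Icc (0:ℝ) T, clamp x = x := fun x hx => by
    simp only [hclampdef]; rw [min_eq_left hx.2, max_eq_right hx.1]
  have hclampcont : Continuous clamp := continuous_const.max (continuous_id.min continuous_const)
  set g' : ℝ → ℝ := fun x => g (clamp x) with hg'def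
  have hg'cont : Continuous g' := hg.comp_continuous hclampcont hclampmem
  have hg'eq : ∀ x ∈ Set.Icc (0:ℝ) T, g' x = g x := fun x hx => by
    simp only [hg'def]; rw [hclampid x hx]
  set m := sInf (g '' Set.Icc 0 T) with hmdef
  set M := sSup (g '' Set.Icc 0 T) with hMdef
  have hcpt : IsCompact (g '' Set.Icc 0 T) := isCompact_Icc.image_of_continuousOn hg
  have hgm : ∀ x ∈ Set.Icc (0:ℝ) T, m ≤ g x ∧ g x ≤ M := fun x hx =>
    ⟨csInf_le hcpt.bddBelow ⟨x, hx, rfl⟩, le_csSup hcpt.bddAbove ⟨x, hx, rfl⟩⟩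
  set E : ℝ → ℝ := fun s => Real.exp (a * s + g' s) with hEdef
  have hEcont : Continuous E :=
    Real.continuous_exp.comp ((continuous_const.mul continuous_id).add hg'cont)
  have hEpos : ∀ s, 0 < E s := fun s => Real.exp_pos _
  set c := Real.exp (-(|a| * T) + m) with hcdef
  set C := Real.exp (|a| * T + M) with hCdef
  have hc : 0 < c := Real.exp_pos _
  have hC : 0 < C := Real.exp_pos _
  have hEbound : ∀ s ∈ Set.Icc (0:ℝ) T, c ≤ E s ∧ E s ≤ C := by
    intro s hs
    have h1 : |a * s| ≤ |a| * T := by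
      rw [abs_mul, abs_of_nonneg hs.1]
      exact mul_le_mul_of_nonneg_left hs.2 (abs_nonneg a)
    obtain ⟨h1a, h1b⟩ := abs_le.mp h1
    have h2 : m ≤ g' s ∧ g' s ≤ M := by
      rw [hg'eq s hs]; exact hgm s hs
    constructor
    · show Real.exp (-(|a| * T) + m) ≤ Real.exp (a * s + g' s)
      exact Real.exp_le_exp.mpr (by linarith [h2.1])
    · show Real.exp (a * s + g' s) ≤ Real.exp (|a| * T + M)
      exact Real.exp_le_exp.mpr (by linarith [h2.2])
  have hIE : IntervalIntegrable E volume 0 T := hEcont.intervalIntegrable _ _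
  set Iden := ∫ s in (0:ℝ)..T, E s with hIdendef
  have hIdenEq : (∫ s in (0:ℝ)..T, Real.exp (a * s + g s)) = Iden := by
    rw [hIdendef]
    refine intervalIntegral.integral_congr fun s hs => ?_
    rw [Set.uIcc_of_le hT.le] at hs
    show Real.exp (a * s + g s) = E s
    simp only [hEdef]; rw [hg'eq s hs]
  have hIdenpos : 0 < Iden := by
    have h1 := intervalIntegral.integral_mono_on hT.le (_root_.intervalIntegrable_const (c := c)) hIE
      (fun x hx => (hEbound x hx).1)
    rw [intervalIntegral.integral_const, sub_zero, smul_eq_mul] at h1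
    rw [hIdendef]; nlinarith
  have hIdenle : Iden ≤ T * C := by
    have h1 := intervalIntegral.integral_mono_on hT.le hIE (_root_.intervalIntegrable_const (c := C))
      (fun x hx => (hEbound x hx).2)
    rw [intervalIntegral.integral_const, sub_zero, smul_eq_mul] at h1
    rw [hIdendef]; linarith
  -- lintegral machinery
  set A := Set.Ioc (0:ℝ) T with hAdef
  have hA : MeasurableSet A := measurableSet_Ioc
  have mke : Measurable fun q : ℝ × ℝ => ENNReal.ofReal (K q.1 q.2) :=
    ENNReal.measurable_ofReal.comp hKmeas
  have msecθ : ∀ θ, Measurable fun s => ENNReal.ofReal (K s θ) := fun θ =>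
    mke.comp (measurable_id.prodMk measurable_const)
  set Φ : ℝ → ENNReal := fun θ => ∫⁻ s in A, ENNReal.ofReal (K s θ) with hΦdef
  set Ψ : ℝ → ENNReal := fun θ =>
    ∫⁻ s in A, ENNReal.ofReal (K s θ) * ENNReal.ofReal (E s) with hΨdef
  have hΦmeas : Measurable Φ := by
    apply Measurable.lintegral_prod_right (f := fun (θ s : ℝ) => ENNReal.ofReal (K s θ))
    exact mke.comp (measurable_snd.prodMk measurable_fst)
  have hΨmeas : Measurable Ψ := by
    apply Measurable.lintegral_prod_right
      (f := fun (θ s : ℝ) => ENNReal.ofReal (K s θ) * ENNReal.ofReal (E s))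
    exact (mke.comp (measurable_snd.prodMk measurable_fst)).mul
      ((ENNReal.measurable_ofReal.comp hEcont.measurable).comp measurable_snd)
  have hNeq : ∀ θ ∈ Set.Icc (0:ℝ) T, (∫ s in θ..T, K s θ * E s) = (Ψ θ).toReal := by
    intro θ hθ
    have hmeasKθ : Measurable fun s => K s θ := hKmeas.comp (measurable_id.prodMk measurable_const)
    rw [intervalIntegral.integral_of_le hθ.2,
      integral_eq_lintegral_of_nonneg_ae (ae_of_all _ fun s => mul_nonneg (hKnn s θ) (hEpos s).le)
        (hmeasKθ.mul hEcont.measurable).aestronglyMeasurable]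
    congr 1
    have hsplit : A = Set.Ioc 0 θ ∪ Set.Ioc θ T := (Set.Ioc_union_Ioc_eq_Ioc hθ.1 hθ.2).symm
    have hzero : (∫⁻ s in Set.Ioc (0:ℝ) θ,
        ENNReal.ofReal (K s θ) * ENNReal.ofReal (E s)) = 0 := by
      rw [← Measure.restrict_congr_set Ioo_ae_eq_Ioc,
        setLIntegral_congr_fun_ae (g := fun _ => 0) measurableSet_Ioo
          (ae_of_all _ fun s hs => by rw [hKzero s θ hs.2]; simp), lintegral_zero]
    simp only [hΨdef]
    rw [hsplit, lintegral_union measurableSet_Ioc (Set.Ioc_disjoint_Ioc_of_le le_rfl), hzero, zero_add]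
    exact lintegral_congr fun s => ENNReal.ofReal_mul (hKnn s θ)
  have hΨlow : ∀ θ, Φ θ * ENNReal.ofReal c ≤ Ψ θ := by
    intro θ
    simp only [hΦdef, hΨdef]
    rw [← lintegral_mul_const _ (msecθ θ)]
    refine lintegral_mono_ae ((ae_restrict_iff' hA).mpr (ae_of_all _ fun s hs => ?_))
    exact mul_le_mul_right (ENNReal.ofReal_le_ofReal (hEbound s ⟨hs.1.le, hs.2⟩).1) _
  have hΨhigh : ∀ θ, Ψ θ ≤ Φ θ * ENNReal.ofReal C := by
    intro θ
    simp only [hΦdef, hΨdef]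
    rw [← lintegral_mul_const _ (msecθ θ)]
    refine lintegral_mono_ae ((ae_restrict_iff' hA).mpr (ae_of_all _ fun s hs => ?_))
    exact mul_le_mul_right (ENNReal.ofReal_le_ofReal (hEbound s ⟨hs.1.le, hs.2⟩).2) _
  have hkey : (∫⁻ θ in A, (Φ θ)^2) = ENNReal.ofReal (T^(p+2)/(p+2)) :=
    PMLBaux.key_identity T H hT ⟨hH1, hH2⟩ K hKmeas hKnn hKzero hrep
  have hV : (∫⁻ θ in A, (Φ θ)^2) ≠ ⊤ := by rw [hkey]; exact ENNReal.ofReal_ne_top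
  have hΦfin : ∀ᵐ θ ∂(volume.restrict A), Φ θ ≠ ⊤ := by
    filter_upwards [ae_lt_top (hΦmeas.pow_const 2) hV] with θ hθ
    intro h; rw [h, ENNReal.top_pow (by norm_num)] at hθ; exact lt_irrefl _ hθ
  set W : ℝ → ℝ := fun θ => (σ * (Ψ θ).toReal / Iden)^2 with hWdef
  have hWmeas : Measurable W :=
    ((measurable_const.mul hΨmeas.ennreal_toReal).div_const _).pow_const 2
  set q := (σ * c / (T * C))^2 with hqdef
  set Q := (σ * C / Iden)^2 with hQdef
  have hq : 0 ≤ q := sq_nonneg _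
  have hbounds : ∀ᵐ θ ∂(volume.restrict A),
      ENNReal.ofReal q * (Φ θ)^2 ≤ ENNReal.ofReal (W θ) ∧
      ENNReal.ofReal (W θ) ≤ ENNReal.ofReal Q * (Φ θ)^2 := by
    filter_upwards [hΦfin] with θ hθfin
    have hΨfin : Ψ θ ≠ ⊤ :=
      (lt_of_le_of_lt (hΨhigh θ) (ENNReal.mul_lt_top hθfin.lt_top ENNReal.ofReal_lt_top)).ne
    set x := (Φ θ).toReal with hxdef
    set y := (Ψ θ).toReal with hydef
    have hx0 : 0 ≤ x := ENNReal.toReal_nonneg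
    have hy0 : 0 ≤ y := ENNReal.toReal_nonneg
    have hylow : c * x ≤ y := by
      have h := ENNReal.toReal_mono hΨfin (hΨlow θ)
      rwa [ENNReal.toReal_mul, ENNReal.toReal_ofReal hc.le, mul_comm] at h
    have hyhigh : y ≤ x * C := by
      have h := ENNReal.toReal_mono
        (by exact ENNReal.mul_ne_top hθfin ENNReal.ofReal_ne_top) (hΨhigh θ)
      rwa [ENNReal.toReal_mul, ENNReal.toReal_ofReal hC.le] at h
    have hWval : W θ = (σ * y / Iden)^2 := rfl
    have hWlow : q * x^2 ≤ W θ := by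
      rw [hWval]
      have h1 : σ * c * x / (T * C) ≤ σ * y / Iden := by
        apply div_le_div₀ (by positivity) (by nlinarith) hIdenpos hIdenle
      calc q * x^2 = (σ * c * x / (T * C))^2 := by rw [hqdef]; ring
        _ ≤ (σ * y / Iden)^2 := by
            apply pow_le_pow_left₀ (by positivity) h1
    have hWhigh : W θ ≤ Q * x^2 := by
      rw [hWval]
      have h1 : σ * y / Iden ≤ σ * (x * C) / Iden :=
        (div_le_div_iff_of_pos_right hIdenpos).mpr (by nlinarith)
      calc (σ * y / Iden)^2 ≤ (σ * (x * C) / Iden)^2 := by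
            apply pow_le_pow_left₀ (by positivity) h1
        _ = Q * x^2 := by rw [hQdef]; ring
    constructor
    · calc ENNReal.ofReal q * (Φ θ)^2
          = ENNReal.ofReal q * (ENNReal.ofReal x)^2 := by rw [hxdef, ENNReal.ofReal_toReal hθfin]
        _ = ENNReal.ofReal (q * x^2) := by
            rw [ENNReal.ofReal_mul hq, ENNReal.ofReal_pow hx0]
        _ ≤ ENNReal.ofReal (W θ) := ENNReal.ofReal_le_ofReal hWlow
    · calc ENNReal.ofReal (W θ) ≤ ENNReal.ofReal (Q * x^2) := ENNReal.ofReal_le_ofReal hWhigh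
        _ = ENNReal.ofReal Q * (ENNReal.ofReal x)^2 := by
            rw [ENNReal.ofReal_mul (sq_nonneg _), ENNReal.ofReal_pow hx0]
        _ = ENNReal.ofReal Q * (Φ θ)^2 := by rw [hxdef, ENNReal.ofReal_toReal hθfin]
  have hLB : ENNReal.ofReal q * (∫⁻ θ in A, (Φ θ)^2) ≤ ∫⁻ θ in A, ENNReal.ofReal (W θ) := by
    rw [← lintegral_const_mul _ (hΦmeas.pow_const 2)]
    exact lintegral_mono_ae (hbounds.mono fun θ h => h.1)
  have hUB : (∫⁻ θ in A, ENNReal.ofReal (W θ)) ≤ ENNReal.ofReal Q * ∫⁻ θ in A, (Φ θ)^2 := by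
    rw [← lintegral_const_mul _ (hΦmeas.pow_const 2)]
    exact lintegral_mono_ae (hbounds.mono fun θ h => h.2)
  have hfin : (∫⁻ θ in A, ENNReal.ofReal (W θ)) ≠ ⊤ := by
    refine ne_top_of_le_ne_top ?_ hUB
    rw [hkey]
    exact (ENNReal.mul_lt_top ENNReal.ofReal_lt_top ENNReal.ofReal_lt_top).ne
  have hWint : (∫ θ in A, W θ) = (∫⁻ θ in A, ENNReal.ofReal (W θ)).toReal :=
    integral_eq_lintegral_of_nonneg_ae (ae_of_all _ fun θ => sq_nonneg _)
      hWmeas.aestronglyMeasurable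
  have hfinal : q * (T^(p+2)/(p+2)) ≤ ∫ θ in A, W θ := by
    rw [hWint]
    have h1 : ENNReal.ofReal (q * (T^(p+2)/(p+2))) ≤ ∫⁻ θ in A, ENNReal.ofReal (W θ) := by
      rw [ENNReal.ofReal_mul hq, ← hkey]
      exact hLB
    have h0 : 0 ≤ q * (T^(p+2)/(p+2)) :=
      mul_nonneg hq (div_nonneg (Real.rpow_nonneg hT.le _) hp2.le)
    calc q * (T^(p+2)/(p+2)) = (ENNReal.ofReal (q * (T^(p+2)/(p+2)))).toReal :=
          (ENNReal.toReal_ofReal h0).symm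
      _ ≤ _ := ENNReal.toReal_mono hfin h1
  -- rewrite goal
  have hRHS : (∫ θ in (0:ℝ)..T,
      (σ * (∫ s in θ..T, K s θ * Real.exp (a * s + g s)) / Iden)^2) = ∫ θ in A, W θ := by
    rw [intervalIntegral.integral_of_le hT.le]
    refine setIntegral_congr_fun hA fun θ hθ => ?_
    have hθ' : θ ∈ Set.Icc (0:ℝ) T := ⟨hθ.1.le, hθ.2⟩
    have hnum : (∫ s in θ..T, K s θ * Real.exp (a * s + g s)) = (Ψ θ).toReal := by
      rw [← hNeq θ hθ']
      refine intervalIntegral.integral_congr fun s hs => ?_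
      rw [Set.uIcc_of_le hθ'.2] at hs
      show K s θ * Real.exp (a * s + g s) = K s θ * E s
      simp only [hEdef]; rw [hg'eq s ⟨le_trans hθ'.1 hs.1, hs.2⟩]
    show (σ * (∫ s in θ..T, K s θ * Real.exp (a * s + g s)) / Iden)^2 = W θ
    rw [hnum]
  have halg : σ ^ 2 * T ^ p / (p + 2) * Real.exp (-4 * |a| * T + 2 * m - 2 * M)
      = q * (T^(p+2)/(p+2)) := by
    have hexp : Real.exp (-4 * |a| * T + 2 * m - 2 * M) = (c/C)^2 := by
      rw [hcdef, hCdef, ← Real.exp_sub, sq, ← Real.exp_add]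
      congr 1; ring
    have hTp : T^(p+2) = T^p * T^2 := by
      rw [Real.rpow_add hT, Real.rpow_two]
    rw [hexp, hqdef, hTp]
    field_simp
  have hgoal2 : (2:ℝ) * H + 2 = p + 2 := by rw [hpdef]
  simp only [hIdenEq]
  rw [hRHS]
  calc σ ^ 2 * T ^ p / (p + 2) * Real.exp (-4 * |a| * T + 2 * m - 2 * M)
      = q * (T^(p+2)/(p+2)) := halg
    _ ≤ (∫ θ in A, W θ) := hfinal

end
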